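/- Let D be a noncommutative division ring and A an abelian subgroup of D^* that is normal in D^*. Then A is contained in the center of D. In particular, D^* has no abelian normal maximal subgroup. -/

import Mathlib

/-- In a noncommutative division ring `D`, an abelian normal subgroup of
`Dˣ` is central; in particular `Dˣ` has no abelian normal maximal subgroup. -/
theorem stmt_6 {D : Type*} [DivisionRing D]
    (hD : ∃ a b : D, a * b ≠ b * a)
    (A : Subgroup Dˣ) (hnorm : A.Normal)
    (habel : ∀ a ∈ A, ∀ b ∈ A, a * b = b * a) :
    (∀ u ∈ A, (u : D) ∈ Subring.center D) ∧ ¬ IsCoatom A := by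
  -- Cartan–Brauer–Hua style argument: every element of A commutes with all of D
  have hcent : ∀ u ∈ A, ∀ x : D, x * (u : D) = (u : D) * x := by
    intro u hu x
    by_contra hx
    have hx0 : x ≠ 0 := by rintro rfl; simp at hx
    have h1x : (1 : D) + x ≠ 0 := by
      intro h
      have hxe : x = -1 := eq_neg_of_add_eq_zero_right h
      apply hx
      rw [hxe, neg_one_mul, mul_neg_one]
    set X : Dˣ := Units.mk0 x hx0 with hX
    set Y : Dˣ := Units.mk0 (1 + x) h1x with hY
    have hbA : X⁻¹ * u * X ∈ A := by
      have := hnorm.conj_mem u hu X⁻¹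
      rwa [inv_inv] at this
    have hcA : Y⁻¹ * u * Y ∈ A := by
      have := hnorm.conj_mem u hu Y⁻¹
      rwa [inv_inv] at this
    set a : D := (u : D)
    set b : D := ((X⁻¹ * u * X : Dˣ) : D) with hbdef
    set c : D := ((Y⁻¹ * u * Y : Dˣ) : D) with hcdef
    have hab : a * b = b * a := congrArg Units.val (habel u hu _ hbA)
    have hac : a * c = c * a := congrArg Units.val (habel u hu _ hcA)
    have hxb : x * b = a * x := by
      have hb : b = x⁻¹ * a * x := by
        rw [hbdef]
        push_cast [hX]
        simp [Units.val_mk0]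
        exact Or.inl rfl
      rw [hb, ← mul_assoc, ← mul_assoc, mul_inv_cancel₀ hx0, one_mul]
    have h1c : (1 + x) * c = a * (1 + x) := by
      have hc : c = (1 + x)⁻¹ * a * (1 + x) := by
        rw [hcdef]
        push_cast [hY]
        simp [Units.val_mk0]
        exact Or.inl rfl
      rw [hc, ← mul_assoc, ← mul_assoc, mul_inv_cancel₀ h1x, one_mul]
    have hsum : c + x * c = a + x * b := by
      have h1 : (1 + x) * c = c + x * c := by rw [add_mul, one_mul]
      rw [← h1, h1c, mul_add, mul_one, hxb]
    have key : x * (b - c) = c - a := by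
      rw [mul_sub]
      calc x * b - x * c = (a + x * b) - (a + x * c) := by
            rw [add_sub_add_left_eq_sub]
        _ = (c + x * c) - (a + x * c) := by rw [hsum]
        _ = c - a := add_sub_add_right_eq_sub _ _ _
    by_cases hbc : b = c
    · have hca : c = a := by
        have hk := key
        rw [hbc, sub_self, mul_zero] at hk
        exact sub_eq_zero.mp hk.symm
      have h2 := h1c
      rw [hca, add_mul, one_mul, mul_add, mul_one] at h2
      exact hx (add_left_cancel h2)
    · have hbc0 : b - c ≠ 0 := sub_ne_zero.mpr hbc
      have hxeq : x = (c - a) * (b - c)⁻¹ := (eq_mul_inv_iff_mul_eq₀ hbc0).mpr key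
      have h1 : a * (c - a) = (c - a) * a := by rw [mul_sub, sub_mul, hac]
      have h2 : Commute a (b - c) := by
        show a * (b - c) = (b - c) * a
        rw [mul_sub, sub_mul, hab, hac]
      have h3 : Commute a (b - c)⁻¹ := h2.inv_right₀
      exact hx (by rw [hxeq, mul_assoc, ← h3.eq, ← mul_assoc, ← h1, mul_assoc])
  refine ⟨fun u hu => Subring.mem_center_iff.mpr (hcent u hu), ?_⟩
  intro hco
  obtain ⟨p, q, hpq⟩ := hD
  have hp0 : p ≠ 0 := by rintro rfl; simp at hpq
  have hq0 : q ≠ 0 := by rintro rfl; simp at hpq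
  set U : Dˣ := Units.mk0 p hp0 with hU
  set V : Dˣ := Units.mk0 q hq0 with hV
  have hUA : U ∉ A := by
    intro h
    exact hpq (hcent U h q).symm
  set B : Subgroup Dˣ := A ⊔ Subgroup.zpowers U with hB
  have hUB : U ∈ B := Subgroup.mem_sup_right (Subgroup.mem_zpowers U)
  have hAB : A < B := lt_of_le_of_ne le_sup_left (fun hEq => hUA (by rw [hEq]; exact hUB))
  have hBtop : B = ⊤ := hco.2 B hAB
  have hBle : B ≤ Subgroup.centralizer {U} := by
    rw [hB]
    apply sup_le
    · intro g hg
      rw [Subgroup.mem_centralizer_iff]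
      intro h hh
      rw [Set.mem_singleton_iff] at hh
      subst hh
      exact Units.ext (hcent g hg (U : D))
    · intro g hg
      rw [Subgroup.mem_centralizer_iff]
      intro h hh
      rw [Set.mem_singleton_iff] at hh
      subst hh
      obtain ⟨n, rfl⟩ := hg
      show U * U ^ n = U ^ n * U
      exact ((Commute.refl U).zpow_right n).eq
  have hVC : V ∈ Subgroup.centralizer {U} := hBle (hBtop ▸ Subgroup.mem_top V)
  rw [Subgroup.mem_centralizer_iff] at hVC
  have h := hVC U (Set.mem_singleton U)
  apply hpq
  have h2 := congrArg Units.val h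
  simpa [hU, hV] using h2
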